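/- Let f, g, c_p > 0 and Π₀ ∈ ℝ, let c(x, y) = (f²/(2y₂))(x₁ − y₁)² + g x₂/y₂ − c_p Π₀ for x ∈ ℝ², y₂ > 0, and let Φ(p) = (p₁/f², (1/g)(p₂ − p₁²/(2f²))) be the c-exponential chart at y = (0, 1). For a seed z ∈ ℝ² with z₂ > 0 and weight w ∈ ℝ, define y* = (z₁/(2z₂), −1/(2z₂)) ∈ ℝ² and ψ = w + (z₁/(2z₂))² + (1/(2z₂))² − (f²/(2z₂)) z₁² + c_p Π₀. Then for all p ∈ ℝ², c(Φ(p), z) − w = ‖p − y*‖² − ‖p‖² − ψ. Consequently, for two seeds z^i, z^j with associated (y*^i, ψ^i), (y*^j, ψ^j): c(Φ(p), z^i) − w^i − c(Φ(p), z^j) + w^j = ‖p − y*^i‖² − ψ^i − ‖p − y*^j‖² + ψ^j for all p ∈ ℝ². -/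
import Mathlib


/-- In the `c`-exponential chart at `y = (0,1)`, the cost becomes a shifted
quadratic: `c(Φ(p), z) − w = ‖p − y*‖² − ‖p‖² − ψ` with `y* = (z₁/(2z₂), −1/(2z₂))`
and `ψ = w + (z₁/(2z₂))² + (1/(2z₂))² − (f²/(2z₂))z₁² + c_p Π₀`; consequently the
pairwise cell-boundary functions are differences of squared distances. -/
theorem stmt_10
    (f g c_p Pr₀ : ℝ) (hf : 0 < f) (hg : 0 < g) (hcp : 0 < c_p)
    (c : (ℝ × ℝ) → (ℝ × ℝ) → ℝ)
    (hc : ∀ x y : ℝ × ℝ,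
      c x y = f ^ 2 / (2 * y.2) * (x.1 - y.1) ^ 2 + g * x.2 / y.2 - c_p * Pr₀)
    (Φ : (ℝ × ℝ) → ℝ × ℝ)
    (hΦ : ∀ p : ℝ × ℝ,
      Φ p = (p.1 / f ^ 2, 1 / g * (p.2 - p.1 ^ 2 / (2 * f ^ 2))))
    (ystar : (ℝ × ℝ) → ℝ × ℝ)
    (hystar : ∀ z : ℝ × ℝ, ystar z = (z.1 / (2 * z.2), -(1 / (2 * z.2))))
    (ψ : (ℝ × ℝ) → ℝ → ℝ)
    (hψ : ∀ (z : ℝ × ℝ) (w : ℝ),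
      ψ z w = w + (z.1 / (2 * z.2)) ^ 2 + (1 / (2 * z.2)) ^ 2
        - f ^ 2 / (2 * z.2) * z.1 ^ 2 + c_p * Pr₀) :
    (∀ z : ℝ × ℝ, 0 < z.2 → ∀ w : ℝ, ∀ p : ℝ × ℝ,
      c (Φ p) z - w
        = ((p.1 - (ystar z).1) ^ 2 + (p.2 - (ystar z).2) ^ 2)
          - (p.1 ^ 2 + p.2 ^ 2) - ψ z w) ∧
    (∀ zi zj : ℝ × ℝ, 0 < zi.2 → 0 < zj.2 → ∀ wi wj : ℝ, ∀ p : ℝ × ℝ,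
      c (Φ p) zi - wi - c (Φ p) zj + wj
        = ((p.1 - (ystar zi).1) ^ 2 + (p.2 - (ystar zi).2) ^ 2) - ψ zi wi
          - ((p.1 - (ystar zj).1) ^ 2 + (p.2 - (ystar zj).2) ^ 2) + ψ zj wj) := by
  have key : ∀ z : ℝ × ℝ, 0 < z.2 → ∀ w : ℝ, ∀ p : ℝ × ℝ,
      c (Φ p) z - w
        = ((p.1 - (ystar z).1) ^ 2 + (p.2 - (ystar z).2) ^ 2)
          - (p.1 ^ 2 + p.2 ^ 2) - ψ z w := by
    intro z hz w p
    rw [hc, hΦ, hystar, hψ]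
    have hf2 : (f:ℝ) ^ 2 ≠ 0 := pow_ne_zero _ hf.ne'
    have hg' : (g:ℝ) ≠ 0 := hg.ne'
    have hz' : z.2 ≠ 0 := hz.ne'
    field_simp
    ring
  refine ⟨key, fun zi zj hi hj wi wj p => ?_⟩
  have h1 := key zi hi wi p
  have h2 := key zj hj wj p
  linarith
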